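/- Let X be a compactum. The maps nX : DX → IX and sX : IX → DX are continuous; consequently nX and sX are mutually inverse homeomorphisms and DX is compact. -/

import Mathlib

/-- An idempotent (Maslov) probability measure on `X`:
a functional on `C(X, ℝ)` preserving constants, translation by constants,
and finite maxima. -/
def IsIdempotentMeasure {X : Type*} [TopologicalSpace X] (μ : C(X, ℝ) → ℝ) : Prop :=
  μ 1 = 1 ∧
  (∀ (l : ℝ) (φ : C(X, ℝ)), μ (ContinuousMap.const X l + φ) = l + μ φ) ∧
  (∀ ψ φ : C(X, ℝ), μ (ψ ⊔ φ) = max (μ ψ) (μ φ))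
/-- Membership in `DX`: an upper semicontinuous function `X → [-∞, 0]`
attaining the maximal value `0`. -/
def MemD {X : Type*} [TopologicalSpace X] (f : X → EReal) : Prop :=
  UpperSemicontinuous f ∧ (∀ x, f x ≤ 0) ∧ ∃ x, f x = 0
/-- The space `DX` of densities. -/
structure Dspace (X : Type*) [TopologicalSpace X] where
  toFun : X → EReal
  memD : MemD toFun

/-- The topology on `DX` generated by the subbase of sets
`S₋(A,t) = {f : f(a) < t for all a ∈ A}` (`A` closed, `t ∈ [-∞,0]`) and
`S₊(U,t) = {f : f(a) > t for some a ∈ U}` (`U` open, `t ∈ [-∞,0]`). -/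
instance (X : Type*) [TopologicalSpace X] : TopologicalSpace (Dspace X) :=
  TopologicalSpace.generateFrom
    ({S | ∃ (A : Set X) (t : EReal), IsClosed A ∧ t ≤ 0 ∧
        S = {f : Dspace X | ∀ a ∈ A, f.toFun a < t}} ∪
     {S | ∃ (U : Set X) (t : EReal), IsOpen U ∧ t ≤ 0 ∧
        S = {f : Dspace X | ∃ a ∈ U, t < f.toFun a}})
/-- The space `IX` of idempotent measures, topologized as a subspace of `ℝ^{C(X)}`. -/
abbrev IspX (X : Type*) [TopologicalSpace X] := {μ : C(X, ℝ) → ℝ // IsIdempotentMeasure μ}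
/-- The density `sX(μ)` of a functional `μ`:
`sX(μ)(x) = inf { μ(φ) : φ ∈ C(X,(-∞,0]), φ(x) = 0 }`, computed in `ℝ ∪ {-∞}`. -/
noncomputable def sFun {X : Type*} [TopologicalSpace X] (μ : C(X, ℝ) → ℝ) (x : X) : EReal :=
  ⨅ φ : {φ : C(X, ℝ) // (∀ y, φ y ≤ 0) ∧ φ x = 0}, ((μ φ.1 : ℝ) : EReal)

set_option linter.unusedSectionVars false
set_option linter.unusedVariables false
set_option maxHeartbeats 1000000

namespace Stmt3Aux
variable {X : Type*} [TopologicalSpace X] {μ : C(X, ℝ) → ℝ}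

/-! ### Basic facts about idempotent measures -/

theorem idem_mono (h : IsIdempotentMeasure μ) {φ ψ : C(X, ℝ)} (hle : φ ≤ ψ) :
    μ φ ≤ μ ψ := by
  have h1 : μ (φ ⊔ ψ) = max (μ φ) (μ ψ) := h.2.2 φ ψ
  rw [sup_eq_right.2 hle] at h1
  rw [h1]; exact le_max_left _ _

theorem idem_zero (h : IsIdempotentMeasure μ) : μ 0 = 0 := by
  have h1 : μ (ContinuousMap.const X (-1) + 1) = -1 + μ 1 := h.2.1 (-1) 1
  have h2 : (ContinuousMap.const X (-1) + 1 : C(X, ℝ)) = 0 := by ext x; simp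
  rw [h2, h.1] at h1; simpa using h1

theorem idem_const (h : IsIdempotentMeasure μ) (l : ℝ) :
    μ (ContinuousMap.const X l) = l := by
  have h1 : μ (ContinuousMap.const X l + 0) = l + μ 0 := h.2.1 l 0
  rw [add_zero, idem_zero h, add_zero] at h1; exact h1

theorem nonempty_of_idem (h : IsIdempotentMeasure μ) : Nonempty X := by
  by_contra hne
  have : (ContinuousMap.const X 1 + 1 : C(X, ℝ)) = 1 := by
    ext x; exact absurd ⟨x⟩ hne
  have h1 := h.2.1 1 1
  rw [this, h.1] at h1; linarith

def idemSupHom (h : IsIdempotentMeasure μ) : SupHom C(X, ℝ) ℝ where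
  toFun := μ
  map_sup' := h.2.2

theorem idem_finset_sup' (h : IsIdempotentMeasure μ) {ι : Type*} {s : Finset ι}
    (hs : s.Nonempty) (g : ι → C(X, ℝ)) :
    μ (s.sup' hs g) = s.sup' hs (fun i => μ (g i)) :=
  map_finset_sup' (idemSupHom h) hs g

/-! ### EReal helper lemmas -/

theorem ereal_iSup_add_coe {ι : Sort*} [Nonempty ι] (g : ι → EReal) (c : ℝ) :
    (⨆ i, g i + (c : EReal)) = (⨆ i, g i) + (c : EReal) := by
  apply le_antisymm
  · exact iSup_le fun i => add_le_add_left (le_iSup g i) _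
  · have h1 : (⨆ i, g i) ≤ (⨆ i, g i + (c : EReal)) - (c : EReal) := by
      apply iSup_le fun i => ?_
      have : g i + (c : EReal) ≤ ⨆ i, g i + (c : EReal) :=
        le_iSup (fun i => g i + (c : EReal)) i
      calc g i = g i + (c : EReal) - c := (EReal.add_sub_cancel_right).symm
        _ ≤ (⨆ i, g i + (c : EReal)) - c := EReal.sub_le_sub this le_rfl
    calc (⨆ i, g i) + (c : EReal) ≤ ((⨆ i, g i + (c : EReal)) - c) + c :=
          add_le_add_left h1 _
      _ = ⨆ i, g i + (c : EReal) := EReal.sub_add_cancel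

theorem ereal_add_sup (a b c : EReal) : a + (b ⊔ c) = (a + b) ⊔ (a + c) := by
  rcases le_total b c with h | h
  · rw [sup_eq_right.2 h, sup_eq_right.2 (add_le_add_right h a)]
  · rw [sup_eq_left.2 h, sup_eq_left.2 (add_le_add_right h a)]

/-! ### The functional `n f` -/

/-- The EReal-valued functional of `n f`. -/
noncomputable def nE (f : X → EReal) (φ : C(X, ℝ)) : EReal :=
  ⨆ x, f x + (φ x : EReal)

variable [CompactSpace X]

theorem nE_le_norm {f : X → EReal} (hf : ∀ x, f x ≤ 0) (φ : C(X, ℝ)) :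
    nE f φ ≤ ((‖φ‖ : ℝ) : EReal) := by
  apply iSup_le fun x => ?_
  calc f x + (φ x : EReal) ≤ 0 + (φ x : EReal) := add_le_add_left (hf x) _
    _ = (φ x : EReal) := by rw [zero_add]
    _ ≤ ((‖φ‖ : ℝ) : EReal) :=
        EReal.coe_le_coe_iff.2 (le_trans (le_abs_self _) (φ.norm_coe_le_norm x))

theorem le_nE {f : X → EReal} {x0 : X} (hx0 : f x0 = 0) (φ : C(X, ℝ)) :
    ((φ x0 : ℝ) : EReal) ≤ nE f φ := by
  have : f x0 + (φ x0 : EReal) = (φ x0 : EReal) := by rw [hx0, zero_add]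
  rw [← this]; exact le_iSup (fun x => f x + (φ x : EReal)) x0

theorem nE_ne_top {f : X → EReal} (hf : ∀ x, f x ≤ 0) (φ : C(X, ℝ)) : nE f φ ≠ ⊤ :=
  fun h => by simpa [h] using nE_le_norm hf φ

theorem nE_ne_bot {f : X → EReal} {x0 : X} (hx0 : f x0 = 0) (φ : C(X, ℝ)) :
    nE f φ ≠ ⊥ := by
  intro h
  have := le_nE hx0 φ
  rw [h, le_bot_iff] at this
  exact EReal.coe_ne_bot _ this

/-- The real-valued functional of `n f`. -/
noncomputable def nR (f : X → EReal) (φ : C(X, ℝ)) : ℝ := (nE f φ).toReal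

theorem nR_coe {f : X → EReal} (hf : MemD f) (φ : C(X, ℝ)) :
    ((nR f φ : ℝ) : EReal) = nE f φ := by
  obtain ⟨x0, hx0⟩ := hf.2.2
  exact EReal.coe_toReal (nE_ne_top hf.2.1 φ) (nE_ne_bot hx0 φ)

theorem nE_one {f : X → EReal} (hf : MemD f) : nE f 1 = ((1 : ℝ) : EReal) := by
  obtain ⟨x0, hx0⟩ := hf.2.2
  have : Nonempty X := ⟨x0⟩
  have h1 : nE f 1 = (⨆ x, f x) + ((1 : ℝ) : EReal) := by
    simpa [nE] using ereal_iSup_add_coe f 1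
  have h2 : (⨆ x, f x) = 0 := le_antisymm (iSup_le hf.2.1) (hx0 ▸ le_iSup f x0)
  rw [h1, h2, zero_add]

theorem nE_const_add {f : X → EReal} (hf : MemD f) (l : ℝ) (φ : C(X, ℝ)) :
    nE f (ContinuousMap.const X l + φ) = (l : EReal) + nE f φ := by
  obtain ⟨x0, hx0⟩ := hf.2.2
  have : Nonempty X := ⟨x0⟩
  have h1 : ∀ x, f x + (((ContinuousMap.const X l + φ) x : ℝ) : EReal)
      = (f x + (φ x : EReal)) + (l : EReal) := by
    intro x
    simp only [ContinuousMap.add_apply, ContinuousMap.const_apply, EReal.coe_add]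
    rw [add_comm ((l : ℝ) : EReal) ((φ x : ℝ) : EReal), ← add_assoc]
  calc nE f (ContinuousMap.const X l + φ)
      = ⨆ x, (f x + (φ x : EReal)) + (l : EReal) := by
        unfold nE; exact iSup_congr h1
    _ = (⨆ x, f x + (φ x : EReal)) + (l : EReal) := ereal_iSup_add_coe _ l
    _ = (l : EReal) + nE f φ := add_comm _ _

theorem nE_sup (f : X → EReal) (ψ φ : C(X, ℝ)) :
    nE f (ψ ⊔ φ) = nE f ψ ⊔ nE f φ := by
  unfold nE
  rw [← iSup_sup_eq]
  apply iSup_congr fun x => ?_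
  have h0 : ((ψ ⊔ φ) x : ℝ) = max (ψ x) (φ x) := rfl
  rw [h0]
  have h1 : ((max (ψ x) (φ x) : ℝ) : EReal) = ((ψ x : ℝ) : EReal) ⊔ ((φ x : ℝ) : EReal) := by
    rcases le_total (ψ x) (φ x) with h | h <;>
      simp [max_eq_right, max_eq_left, h, EReal.coe_le_coe_iff]
  rw [h1, ereal_add_sup]

theorem nR_idem {f : X → EReal} (hf : MemD f) : IsIdempotentMeasure (nR f) := by
  refine ⟨?_, ?_, ?_⟩
  · have := nR_coe hf 1
    rw [nE_one hf] at this
    exact_mod_cast this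
  · intro l φ
    have h1 := nR_coe hf (ContinuousMap.const X l + φ)
    rw [nE_const_add hf l φ, ← nR_coe hf φ, ← EReal.coe_add] at h1
    exact_mod_cast h1
  · intro ψ φ
    have h1 := nR_coe hf (ψ ⊔ φ)
    rw [nE_sup f ψ φ, ← nR_coe hf ψ, ← nR_coe hf φ] at h1
    have h2 : ((nR f ψ : ℝ) : EReal) ⊔ ((nR f φ : ℝ) : EReal)
        = ((max (nR f ψ) (nR f φ) : ℝ) : EReal) := by
      rcases le_total (nR f ψ) (nR f φ) with h | h <;>
        simp [max_eq_right, max_eq_left, h, EReal.coe_le_coe_iff]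
    rw [h2] at h1
    exact_mod_cast h1
/-! ### Facts about `sFun` -/

theorem sFun_le (h : IsIdempotentMeasure μ) {x : X} {φ : C(X, ℝ)}
    (h1 : ∀ y, φ y ≤ 0) (h2 : φ x = 0) : sFun μ x ≤ ((μ φ : ℝ) : EReal) :=
  iInf_le (fun ψ : {φ : C(X, ℝ) // (∀ y, φ y ≤ 0) ∧ φ x = 0} => ((μ ψ.1 : ℝ) : EReal))
    ⟨φ, h1, h2⟩

theorem sFun_le_zero (h : IsIdempotentMeasure μ) (x : X) : sFun μ x ≤ 0 := by
  have := sFun_le h (x := x) (φ := 0) (fun y => le_rfl) rfl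
  rwa [idem_zero h, EReal.coe_zero] at this

/-- Main translation estimate: `sFun μ y ≤ μ φ - φ y`. -/
theorem sFun_le_sub (h : IsIdempotentMeasure μ) (φ : C(X, ℝ)) (y : X) :
    sFun μ y ≤ ((μ φ - φ y : ℝ) : EReal) := by
  set ψ : C(X, ℝ) := (ContinuousMap.const X (-φ y) + φ) ⊓ 0 with hψ
  have hq1 : ∀ z, ψ z ≤ 0 := fun z =>
    inf_le_right (a := (ContinuousMap.const X (-φ y) + φ)) (b := (0 : C(X, ℝ))) z
  have hq2 : ψ y = 0 := by
    simp only [hψ, ContinuousMap.inf_apply, ContinuousMap.add_apply,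
      ContinuousMap.const_apply, ContinuousMap.zero_apply]
    simp
  have h3 : μ ψ ≤ μ (ContinuousMap.const X (-φ y) + φ) := idem_mono h inf_le_left
  rw [h.2.1 (-φ y) φ] at h3
  calc sFun μ y ≤ ((μ ψ : ℝ) : EReal) := sFun_le h hq1 hq2
    _ ≤ ((μ φ - φ y : ℝ) : EReal) := by rw [EReal.coe_le_coe_iff]; linarith

theorem sFun_usc (h : IsIdempotentMeasure μ) : UpperSemicontinuous (sFun μ) := by
  intro x y hy
  obtain ⟨z, hz1, hz2⟩ := EReal.lt_iff_exists_real_btwn.1 hy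
  obtain ⟨⟨φ, hφ1, hφ2⟩, hφ3⟩ := iInf_lt_iff.1 hz1
  have hμz : μ φ < z := EReal.coe_lt_coe_iff.1 hφ3
  set δ := z - μ φ with hδ
  have hδpos : 0 < δ := by simp [hδ]; linarith
  have hopen : IsOpen {w : X | -δ < φ w} := isOpen_lt continuous_const φ.continuous
  have hmem : x ∈ {w : X | -δ < φ w} := by simp [hφ2]; linarith
  filter_upwards [hopen.mem_nhds hmem] with w hw
  have h1 : sFun μ w ≤ ((μ φ - φ w : ℝ) : EReal) := sFun_le_sub h φ w
  have h2 : μ φ - φ w < z := by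
    have : -δ < φ w := hw
    simp only [hδ] at this ⊢; linarith
  calc sFun μ w ≤ ((μ φ - φ w : ℝ) : EReal) := h1
    _ < (z : EReal) := EReal.coe_lt_coe_iff.2 h2
    _ < y := hz2

theorem sFun_exists_zero (h : IsIdempotentMeasure μ) : ∃ x, sFun μ x = 0 := by
  by_contra hno
  push_neg at hno
  have hlt : ∀ x, sFun μ x < 0 := fun x => lt_of_le_of_ne (sFun_le_zero h x) (hno x)
  have hch : ∀ x : X, ∃ φ : C(X, ℝ), (∀ y, φ y ≤ 0) ∧ φ x = 0 ∧ μ φ < 0 := by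
    intro x
    obtain ⟨⟨φ, hφ1, hφ2⟩, hφ3⟩ := iInf_lt_iff.1 (hlt x)
    exact ⟨φ, hφ1, hφ2, by exact_mod_cast hφ3⟩
  choose φ hφ1 hφ2 hφ3 using hch
  set U : X → Set X := fun x => {y | μ (φ x) < φ x y} with hU
  have hUopen : ∀ x, IsOpen (U x) := fun x => isOpen_lt continuous_const (φ x).continuous
  have hcover : (Set.univ : Set X) ⊆ ⋃ x, U x := by
    intro y _
    exact Set.mem_iUnion.2 ⟨y, by simpa [hU, hφ2 y] using hφ3 y⟩
  obtain ⟨s, hs⟩ := isCompact_univ.elim_finite_subcover U hUopen hcover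
  have : Nonempty X := nonempty_of_idem h
  obtain ⟨x0⟩ := this
  obtain ⟨i, hi, hix0⟩ := by simpa using hs (Set.mem_univ x0)
  have hsne : s.Nonempty := ⟨i, hi⟩
  set g : X → C(X, ℝ) := fun i => ContinuousMap.const X (-μ (φ i)) + φ i with hg
  set ψ : C(X, ℝ) := s.sup' hsne g with hψ
  have hμψ : μ ψ = 0 := by
    rw [hψ, idem_finset_sup' h hsne g]
    have : ∀ j ∈ s, μ (g j) = 0 := by
      intro j _
      rw [hg]; simp only []
      rw [h.2.1 (-μ (φ j)) (φ j)]; ring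
    rw [Finset.sup'_congr hsne rfl this]
    simp
  have hψpos : ∀ y, 0 < ψ y := by
    intro y
    obtain ⟨j, hj, hjy⟩ := by simpa using hs (Set.mem_univ y)
    have h1 : g j ≤ ψ := Finset.le_sup' g hj
    have h2 : 0 < g j y := by
      rw [hg]; simp only [ContinuousMap.add_apply, ContinuousMap.const_apply]
      have : μ (φ j) < φ j y := hjy
      linarith
    exact lt_of_lt_of_le h2 (h1 y)
  obtain ⟨y0, -, hy0⟩ := isCompact_univ.exists_isMinOn ⟨x0, Set.mem_univ x0⟩
    ψ.continuous.continuousOn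
  have hδ : 0 < ψ y0 := hψpos y0
  have hle : ContinuousMap.const X (ψ y0) ≤ ψ := fun y => hy0 (Set.mem_univ y)
  have := idem_mono h hle
  rw [idem_const h, hμψ] at this
  linarith

theorem sFun_memD (h : IsIdempotentMeasure μ) : MemD (sFun μ) :=
  ⟨sFun_usc h, sFun_le_zero h, sFun_exists_zero h⟩

/-- Key identity: `n (s μ) = μ` at the level of `EReal` functionals. -/
theorem nE_sFun (h : IsIdempotentMeasure μ) (φ : C(X, ℝ)) :
    nE (sFun μ) φ = ((μ φ : ℝ) : EReal) := by
  apply le_antisymm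
  · apply iSup_le fun x => ?_
    have h1 : sFun μ x ≤ ((μ φ - φ x : ℝ) : EReal) := sFun_le_sub h φ x
    calc sFun μ x + (φ x : EReal) ≤ ((μ φ - φ x : ℝ) : EReal) + (φ x : EReal) :=
          add_le_add_left h1 _
      _ = ((μ φ : ℝ) : EReal) := by rw [← EReal.coe_add]; norm_num
  · by_contra hlt
    push_neg at hlt
    obtain ⟨c, hc1, hc2⟩ := EReal.lt_iff_exists_real_btwn.1 hlt
    have hμc : c < μ φ := by exact_mod_cast hc2
    have hkey : ∀ ε : ℝ, 0 < ε → μ φ ≤ c + ε := by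
      intro ε hε
      have hx : ∀ x : X, ∃ ψ : C(X, ℝ), (∀ y, ψ y ≤ 0) ∧ ψ x = 0 ∧ μ ψ < c - φ x := by
        intro x
        have h1 : sFun μ x + (φ x : EReal) < (c : EReal) :=
          lt_of_le_of_lt (le_iSup (fun x => sFun μ x + (φ x : EReal)) x) hc1
        have h2 : sFun μ x < ((c - φ x : ℝ) : EReal) := by
          have h3 := EReal.add_lt_add_right_coe h1 (-φ x)
          rw [EReal.coe_neg, ← sub_eq_add_neg, EReal.add_sub_cancel_right,
            ← sub_eq_add_neg, ← EReal.coe_sub] at h3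
          exact h3
        obtain ⟨⟨ψ, hψ1, hψ2⟩, hψ3⟩ := iInf_lt_iff.1 h2
        exact ⟨ψ, hψ1, hψ2, by exact_mod_cast hψ3⟩
      choose ψ hψ1 hψ2 hψ3 using hx
      set θ : X → C(X, ℝ) := fun x => ContinuousMap.const X (φ x) + ψ x with hθ
      have hμθ : ∀ x, μ (θ x) < c := by
        intro x; rw [hθ]; simp only []
        rw [h.2.1]; have := hψ3 x; linarith
      set V : X → Set X := fun x => {y | φ y < θ x y + ε} with hV
      have hVopen : ∀ x, IsOpen (V x) :=
        fun x => isOpen_lt φ.continuous ((θ x).continuous.add continuous_const)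
      have hVmem : ∀ x, x ∈ V x := by
        intro x
        have : θ x x = φ x := by
          rw [hθ]; simp only [ContinuousMap.add_apply, ContinuousMap.const_apply, hψ2 x]; ring
        simp only [hV, Set.mem_setOf_eq, this]; linarith
      have hcover : (Set.univ : Set X) ⊆ ⋃ x, V x := fun y _ => Set.mem_iUnion.2 ⟨y, hVmem y⟩
      obtain ⟨s, hs⟩ := isCompact_univ.elim_finite_subcover V hVopen hcover
      have : Nonempty X := nonempty_of_idem h
      obtain ⟨x0⟩ := this
      obtain ⟨i, hi, -⟩ := by simpa using hs (Set.mem_univ x0)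
      have hsne : s.Nonempty := ⟨i, hi⟩
      set η : C(X, ℝ) := s.sup' hsne θ with hη
      have hφη : φ ≤ ContinuousMap.const X ε + η := by
        rw [ContinuousMap.le_def]
        intro y
        obtain ⟨j, hj, hjy⟩ := by simpa using hs (Set.mem_univ y)
        have h1 : θ j ≤ η := Finset.le_sup' θ hj
        have h2 : φ y < θ j y + ε := hjy
        have h3 : (θ j) y ≤ η y := h1 y
        simp only [ContinuousMap.add_apply, ContinuousMap.const_apply]
        linarith
      have h4 : μ φ ≤ μ (ContinuousMap.const X ε + η) := idem_mono h hφη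
      rw [h.2.1] at h4
      have h5 : μ η < c := by
        rw [hη, idem_finset_sup' h hsne θ]
        exact (Finset.sup'_lt_iff hsne).2 fun j hj => hμθ j
      linarith
    have := hkey ((μ φ - c) / 2) (by linarith)
    linarith

/-! ### `s ∘ n = id` -/

variable [T2Space X]

theorem sFun_nR {f : X → EReal} (hf : MemD f) (x : X) : sFun (nR f) x = f x := by
  have hidem : IsIdempotentMeasure (nR f) := nR_idem hf
  apply le_antisymm
  · by_contra hlt
    push_neg at hlt
    obtain ⟨t, ht1, ht2⟩ := EReal.lt_iff_exists_real_btwn.1 hlt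
    have htneg : t < 0 := by
      have h0 := lt_of_lt_of_le ht2 (sFun_le_zero hidem x)
      exact_mod_cast h0
    set V : Set X := {y | f y < (t : EReal)} with hV
    have hVopen : IsOpen V := upperSemicontinuous_iff_isOpen_preimage.1 hf.1 t
    have hxV : x ∈ V := ht1
    have hdisj : Disjoint {x} Vᶜ := by
      rw [Set.disjoint_left]
      rintro a rfl
      simpa using hxV
    obtain ⟨g, hg0, hg1, hg01⟩ := exists_continuous_zero_one_of_isClosed
      isClosed_singleton hVopen.isClosed_compl hdisj
    set φ : C(X, ℝ) := ContinuousMap.const X t * g with hφ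
    have hφ1 : ∀ y, φ y ≤ 0 := by
      intro y
      simp only [hφ, ContinuousMap.mul_apply, ContinuousMap.const_apply]
      exact mul_nonpos_iff.2 (Or.inr ⟨htneg.le, (hg01 y).1⟩)
    have hφx : φ x = 0 := by
      have : g x = 0 := hg0 rfl
      simp [hφ, this]
    have hb : sFun (nR f) x ≤ ((nR f φ : ℝ) : EReal) := sFun_le hidem hφ1 hφx
    have hnE : nE f φ ≤ (t : EReal) := by
      apply iSup_le fun y => ?_
      by_cases hy : y ∈ V
      · calc f y + ((φ y : ℝ) : EReal) ≤ f y + ((0 : ℝ) : EReal) :=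
              add_le_add_right (EReal.coe_le_coe_iff.2 (hφ1 y)) _
          _ = f y := by simp
          _ ≤ (t : EReal) := le_of_lt hy
      · have hgy : g y = 1 := hg1 hy
        have : φ y = t := by simp [hφ, hgy]
        rw [this]
        calc f y + (t : EReal) ≤ 0 + (t : EReal) := add_le_add_left (hf.2.1 y) _
          _ = (t : EReal) := zero_add _
    rw [nR_coe hf φ] at hb
    exact absurd (lt_of_le_of_lt (hb.trans hnE) ht2) (lt_irrefl _)
  · apply le_iInf
    rintro ⟨ψ, hψ1, hψ2⟩
    rw [nR_coe hf ψ]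
    calc f x = f x + ((ψ x : ℝ) : EReal) := by rw [hψ2]; simp
      _ ≤ nE f ψ := le_iSup (fun y => f y + ((ψ y : ℝ) : EReal)) x

/-! ### Compactness of `IspX` -/

theorem idem_le_norm (h : IsIdempotentMeasure μ) (φ : C(X, ℝ)) :
    |μ φ| ≤ ‖φ‖ := by
  rcases nonempty_of_idem h with ⟨x0⟩
  have hb : ∀ x, |φ x| ≤ ‖φ‖ := fun x => φ.norm_coe_le_norm x
  have h1 : φ ≤ ContinuousMap.const X ‖φ‖ := fun x => (abs_le.1 (hb x)).2
  have h2 : ContinuousMap.const X (-‖φ‖) ≤ φ := fun x => (abs_le.1 (hb x)).1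
  have h3 := idem_mono h h1
  have h4 := idem_mono h h2
  rw [idem_const h] at h3 h4
  rw [abs_le]; constructor <;> linarith

theorem isCompact_setOf_idem :
    IsCompact {μ : C(X, ℝ) → ℝ | IsIdempotentMeasure μ} := by
  have hsub : {μ : C(X, ℝ) → ℝ | IsIdempotentMeasure μ}
      ⊆ Set.univ.pi fun φ : C(X, ℝ) => Set.Icc (-‖φ‖) ‖φ‖ := by
    intro μ hμ φ _
    exact abs_le.1 (idem_le_norm hμ φ)
  have hcpt : IsCompact (Set.univ.pi fun φ : C(X, ℝ) => Set.Icc (-‖φ‖ : ℝ) ‖φ‖) :=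
    isCompact_univ_pi fun φ => isCompact_Icc
  apply hcpt.of_isClosed_subset ?_ hsub
  have heq : {μ : C(X, ℝ) → ℝ | IsIdempotentMeasure μ} =
      {μ : C(X, ℝ) → ℝ | μ 1 = 1} ∩
      ((⋂ (l : ℝ), ⋂ (φ : C(X, ℝ)),
          {μ : C(X, ℝ) → ℝ | μ (ContinuousMap.const X l + φ) = l + μ φ}) ∩
       ⋂ (ψ : C(X, ℝ)), ⋂ (φ : C(X, ℝ)),
          {μ : C(X, ℝ) → ℝ | μ (ψ ⊔ φ) = max (μ ψ) (μ φ)}) := by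
    ext μ
    simp only [Set.mem_setOf_eq, Set.mem_inter_iff, Set.mem_iInter, IsIdempotentMeasure]
    try tauto
  rw [heq]
  refine (isClosed_eq (continuous_apply _) continuous_const).inter (IsClosed.inter ?_ ?_)
  · exact isClosed_iInter fun l => isClosed_iInter fun φ =>
      isClosed_eq (continuous_apply _) (continuous_const.add (continuous_apply _))
  · exact isClosed_iInter fun ψ => isClosed_iInter fun φ =>
      isClosed_eq (continuous_apply _) ((continuous_apply ψ).max (continuous_apply φ))

/-! ### Continuity of `s` -/

theorem isOpen_eval_lt (ψ : C(X, ℝ)) (c : ℝ) : IsOpen {ν : IspX X | ν.1 ψ < c} :=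
  isOpen_Iio.preimage ((continuous_apply ψ).comp continuous_subtype_val)

theorem isOpen_lt_eval (ψ : C(X, ℝ)) (c : ℝ) : IsOpen {ν : IspX X | c < ν.1 ψ} :=
  isOpen_Ioi.preimage ((continuous_apply ψ).comp continuous_subtype_val)

theorem continuous_sMap :
    Continuous (fun μ : IspX X => (⟨sFun μ.1, sFun_memD μ.2⟩ : Dspace X)) := by
  apply continuous_generateFrom_iff.2
  rintro S (⟨A, t, hA, ht, rfl⟩ | ⟨U, t, hU, ht, rfl⟩)
  · -- S₋ case
    show IsOpen {μ : IspX X | ∀ a ∈ A, sFun μ.1 a < t}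
    by_cases hbot : t = ⊥
    · subst hbot
      rcases Set.eq_empty_or_nonempty A with rfl | ⟨a, ha⟩
      · simp only [Set.mem_empty_iff_false, false_implies, implies_true, Set.setOf_true]
        exact isOpen_univ
      · have hemp : {μ : IspX X | ∀ a ∈ A, sFun μ.1 a < ⊥} = ∅ := by
          ext μ; simp only [Set.mem_setOf_eq, Set.mem_empty_iff_false, iff_false]
          intro hμ; exact absurd (hμ a ha) not_lt_bot
        rw [hemp]; exact isOpen_empty
    · have htop : t ≠ ⊤ := by
        intro h; rw [h] at ht
        exact absurd (lt_of_lt_of_le (by norm_num : (0 : EReal) < ⊤) ht) (lt_irrefl _)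
      obtain ⟨tr, rfl⟩ : ∃ tr : ℝ, t = (tr : EReal) :=
        ⟨t.toReal, (EReal.coe_toReal htop hbot).symm⟩
      rw [isOpen_iff_forall_mem_open]
      intro μ hμ
      simp only [Set.mem_setOf_eq] at hμ
      have hch : ∀ a : A, ∃ (φ : C(X, ℝ)) (r : ℝ),
          (∀ y, φ y ≤ 0) ∧ φ a = 0 ∧ μ.1 φ < r ∧ r < tr := by
        rintro ⟨a, ha⟩
        obtain ⟨⟨φ, hφ1, hφ2⟩, hφ3⟩ := iInf_lt_iff.1 (hμ a ha)
        have hc : μ.1 φ < tr := by exact_mod_cast hφ3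
        exact ⟨φ, (μ.1 φ + tr) / 2, hφ1, hφ2, by linarith, by linarith⟩
      choose φ r hφ1 hφ2 hφ3 hφ4 using hch
      set W : A → Set X := fun a => {y | r a - tr < φ a y} with hW
      have hWopen : ∀ a, IsOpen (W a) := fun a =>
        isOpen_lt continuous_const (φ a).continuous
      have hAsub : A ⊆ ⋃ a : A, W a := by
        intro a ha
        apply Set.mem_iUnion.2 ⟨⟨a, ha⟩, ?_⟩
        simp only [hW, Set.mem_setOf_eq, hφ2 ⟨a, ha⟩]
        linarith [hφ4 ⟨a, ha⟩]
      obtain ⟨sF, hsF⟩ := hA.isCompact.elim_finite_subcover W hWopen hAsub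
      refine ⟨⋂ j ∈ sF, {ν : IspX X | ν.1 (φ j) < r j}, ?_, ?_, ?_⟩
      · intro ν hν
        simp only [Set.mem_iInter, Set.mem_setOf_eq] at hν
        intro a ha
        obtain ⟨j, hj, hja⟩ := Set.mem_iUnion₂.1 (hsF ha)
        have h1 : sFun ν.1 a ≤ ((ν.1 (φ j) - φ j a : ℝ) : EReal) := sFun_le_sub ν.2 (φ j) a
        have h2 : ν.1 (φ j) - φ j a < tr := by
          have h3 : r j - tr < φ j a := hja
          have h4 : ν.1 (φ j) < r j := hν j hj
          linarith
        exact lt_of_le_of_lt h1 (EReal.coe_lt_coe_iff.2 h2)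
      · exact isOpen_biInter_finset fun j _ => isOpen_eval_lt (φ j) (r j)
      · simp only [Set.mem_iInter, Set.mem_setOf_eq]
        intro j _
        exact hφ3 j
  · -- S₊ case
    show IsOpen {μ : IspX X | ∃ a ∈ U, t < sFun μ.1 a}
    have heq : {μ : IspX X | ∃ a ∈ U, t < sFun μ.1 a} =
        ⋃ (p : C(X, ℝ) × ℝ) (_ : (∀ y, p.1 y ≤ 0) ∧ t < (p.2 : EReal) ∧
            ∀ y ∉ U, p.1 y < p.2),
          {ν : IspX X | p.2 < ν.1 p.1} := by
      ext μ
      simp only [Set.mem_setOf_eq, Set.mem_iUnion]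
      constructor
      · rintro ⟨a, haU, hta⟩
        have h0 : sFun μ.1 a ≤ 0 := sFun_le_zero μ.2 a
        obtain ⟨rr, hr1, hr2⟩ := EReal.lt_iff_exists_real_btwn.1 hta
        have hrneg : rr < 0 := by
          have := lt_of_lt_of_le hr2 h0
          exact_mod_cast this
        have hdisj : Disjoint ({a} : Set X) Uᶜ := by
          rw [Set.disjoint_left]
          intro b hb hbc
          rw [Set.mem_singleton_iff] at hb
          subst hb
          exact hbc haU
        obtain ⟨g, hg0, hg1, hg01⟩ := exists_continuous_zero_one_of_isClosed
          isClosed_singleton hU.isClosed_compl hdisj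
        set ψ : C(X, ℝ) := ContinuousMap.const X (rr - 1) * g with hψ
        have hψ1 : ∀ y, ψ y ≤ 0 := by
          intro y
          simp only [hψ, ContinuousMap.mul_apply, ContinuousMap.const_apply]
          exact mul_nonpos_iff.2 (Or.inr ⟨by linarith, (hg01 y).1⟩)
        have hψa : ψ a = 0 := by
          have : g a = 0 := hg0 rfl
          simp [hψ, this]
        have hψout : ∀ y ∉ U, ψ y < rr := by
          intro y hy
          have : g y = 1 := hg1 hy
          simp only [hψ, ContinuousMap.mul_apply, ContinuousMap.const_apply, this, mul_one]
          linarith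
        refine ⟨(ψ, rr), ⟨hψ1, hr1, hψout⟩, ?_⟩
        -- μ ψ > rr
        have hkey : ((μ.1 ψ : ℝ) : EReal) = nE (sFun μ.1) ψ := (nE_sFun μ.2 ψ).symm
        have h1 : sFun μ.1 a ≤ nE (sFun μ.1) ψ := by
          have : sFun μ.1 a = sFun μ.1 a + ((ψ a : ℝ) : EReal) := by rw [hψa]; simp
          rw [this]
          exact le_iSup (fun y => sFun μ.1 y + ((ψ y : ℝ) : EReal)) a
        have h2 : (rr : EReal) < ((μ.1 ψ : ℝ) : EReal) := by
          rw [hkey]; exact lt_of_lt_of_le hr2 h1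
        exact_mod_cast h2
      · rintro ⟨⟨ψ, rr⟩, ⟨hψ1, hrr, hψout⟩, hμψ⟩
        have hkey : ((μ.1 ψ : ℝ) : EReal) = nE (sFun μ.1) ψ := (nE_sFun μ.2 ψ).symm
        have h1 : (rr : EReal) < nE (sFun μ.1) ψ := by
          rw [← hkey]; exact_mod_cast hμψ
        obtain ⟨x, hx⟩ := lt_iSup_iff.1 h1
        by_cases hxU : x ∈ U
        · refine ⟨x, hxU, ?_⟩
          have h2 : sFun μ.1 x + ((ψ x : ℝ) : EReal) ≤ sFun μ.1 x := by
            calc sFun μ.1 x + ((ψ x : ℝ) : EReal) ≤ sFun μ.1 x + ((0 : ℝ) : EReal) :=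
                  add_le_add_right (EReal.coe_le_coe_iff.2 (hψ1 x)) _
              _ = sFun μ.1 x := by simp
          exact lt_of_lt_of_le hrr (le_trans (le_of_lt hx) h2)
        · exfalso
          have h2 : sFun μ.1 x + ((ψ x : ℝ) : EReal) ≤ ((ψ x : ℝ) : EReal) := by
            calc sFun μ.1 x + ((ψ x : ℝ) : EReal) ≤ 0 + ((ψ x : ℝ) : EReal) :=
                  add_le_add_left (sFun_le_zero μ.2 x) _
              _ = ((ψ x : ℝ) : EReal) := zero_add _
          have h3 : (rr : EReal) < ((ψ x : ℝ) : EReal) := lt_of_lt_of_le hx h2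
          have h4 : ψ x < rr := hψout x hxU
          have := EReal.coe_lt_coe_iff.1 h3
          linarith
    rw [heq]
    exact isOpen_iUnion fun p => isOpen_iUnion fun _ => isOpen_lt_eval p.1 p.2

/-! ### Continuity of `n` -/

theorem isOpen_basic_lt {A : Set X} (hA : IsClosed A) {q : ℝ} (hq : q ≤ 0) :
    IsOpen {g : Dspace X | ∀ a ∈ A, g.toFun a < ((q : ℝ) : EReal)} := by
  apply TopologicalSpace.isOpen_generateFrom_of_mem
  exact Or.inl ⟨A, (q : EReal), hA, by exact_mod_cast hq, rfl⟩

theorem isOpen_basic_gt {U : Set X} (hU : IsOpen U) {q : ℝ} (hq : q ≤ 0) :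
    IsOpen {g : Dspace X | ∃ a ∈ U, ((q : ℝ) : EReal) < g.toFun a} := by
  apply TopologicalSpace.isOpen_generateFrom_of_mem
  exact Or.inr ⟨U, (q : EReal), hU, by exact_mod_cast hq, rfl⟩

theorem isOpen_nE_gt (φ : C(X, ℝ)) (c : ℝ) :
    IsOpen {f : Dspace X | (c : EReal) < nE f.toFun φ} := by
  have heq : {f : Dspace X | (c : EReal) < nE f.toFun φ} =
      ⋃ (q : ℝ) (_ : q ≤ 0),
        {g : Dspace X | ∃ a ∈ {x | c - φ x < q}, ((q : ℝ) : EReal) < g.toFun a} := by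
    ext f
    simp only [Set.mem_setOf_eq, Set.mem_iUnion]
    constructor
    · intro hf
      obtain ⟨x, hx⟩ := lt_iSup_iff.1 hf
      have hne : f.toFun x ≠ ⊥ := by
        intro hb; rw [hb, EReal.bot_add] at hx
        exact absurd hx not_lt_bot
      have hle := f.memD.2.1 x
      have hnetop : f.toFun x ≠ ⊤ := (lt_of_le_of_lt hle (by norm_num : (0 : EReal) < ⊤)).ne
      set a := (f.toFun x).toReal with ha
      have hcoe : f.toFun x = (a : EReal) := (EReal.coe_toReal hnetop hne).symm
      have hx' : c < a + φ x := by
        rw [hcoe, ← EReal.coe_add] at hx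
        exact_mod_cast hx
      have ha0 : a ≤ 0 := by
        rw [hcoe] at hle; exact_mod_cast hle
      refine ⟨(a + (c - φ x)) / 2, by linarith, x,
        show c - φ x < (a + (c - φ x)) / 2 by linarith, ?_⟩
      rw [hcoe]
      exact_mod_cast (by linarith : (a + (c - φ x)) / 2 < a)
    · rintro ⟨q, hq, a, ha, hqa⟩
      have ha' : c - φ a < q := ha
      have h1 : ((q : ℝ) : EReal) + ((φ a : ℝ) : EReal) < f.toFun a + ((φ a : ℝ) : EReal) :=
        EReal.add_lt_add_right_coe hqa (φ a)
      have h2 : (c : EReal) < ((q : ℝ) : EReal) + ((φ a : ℝ) : EReal) := by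
        rw [← EReal.coe_add]
        exact_mod_cast (by linarith [ha'] : c < q + φ a)
      exact lt_of_lt_of_le (h2.trans h1)
        (le_iSup (fun y => f.toFun y + ((φ y : ℝ) : EReal)) a)
  rw [heq]
  exact isOpen_iUnion fun q => isOpen_iUnion fun hq =>
    isOpen_basic_gt (isOpen_lt (continuous_const.sub φ.continuous) continuous_const) hq

theorem isOpen_nE_lt (φ : C(X, ℝ)) (c : ℝ) :
    IsOpen {f : Dspace X | nE f.toFun φ < (c : EReal)} := by
  rw [isOpen_iff_forall_mem_open]
  intro f hf
  simp only [Set.mem_setOf_eq] at hf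
  obtain ⟨x0, hx0⟩ := f.memD.2.2
  have hch : ∀ x : X, ∃ s t : ℝ, f.toFun x < (s : EReal) ∧ φ x < t ∧ s + t < c := by
    intro x
    have hxc : f.toFun x + ((φ x : ℝ) : EReal) < (c : EReal) :=
      lt_of_le_of_lt (le_iSup (fun y => f.toFun y + ((φ y : ℝ) : EReal)) x) hf
    rcases eq_or_ne (f.toFun x) ⊥ with hb | hb
    · refine ⟨c - φ x - 1, φ x + 1 / 2, ?_, by linarith, by linarith⟩
      rw [hb]; exact bot_lt_iff_ne_bot.2 (EReal.coe_ne_bot _)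
    · have hle := f.memD.2.1 x
      have hnetop : f.toFun x ≠ ⊤ := (lt_of_le_of_lt hle (by norm_num : (0 : EReal) < ⊤)).ne
      set a := (f.toFun x).toReal with ha
      have hcoe : f.toFun x = (a : EReal) := (EReal.coe_toReal hnetop hb).symm
      have h2 : a + φ x < c := by
        rw [hcoe, ← EReal.coe_add] at hxc
        exact_mod_cast hxc
      refine ⟨a + (c - a - φ x) / 3, φ x + (c - a - φ x) / 3, ?_, by linarith, by linarith⟩
      rw [hcoe]
      exact_mod_cast (by linarith : a < a + (c - a - φ x) / 3)
  choose q r hq hr hqr using hch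
  set V : X → Set X := fun x => {y | f.toFun y < (q x : EReal)} ∩ {y | φ y < r x} with hV
  have hVopen : ∀ x, IsOpen (V x) := fun x =>
    ((upperSemicontinuous_iff_isOpen_preimage.1 f.memD.1) _).inter
      (isOpen_lt φ.continuous continuous_const)
  have hVmem : ∀ x, x ∈ V x := fun x => ⟨hq x, hr x⟩
  have hcov : (Set.univ : Set X) ⊆ ⋃ x, V x := fun y _ => Set.mem_iUnion.2 ⟨y, hVmem y⟩
  obtain ⟨sF, hsF⟩ := isCompact_univ.elim_finite_subcover V hVopen hcov
  have hsne : sF.Nonempty := by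
    obtain ⟨i, hi, -⟩ := Set.mem_iUnion₂.1 (hsF (Set.mem_univ x0))
    exact ⟨i, hi⟩
  have hcov2 : (Set.univ : Set X) ⊆ ⋃ j : sF, V j := by
    intro y hy
    obtain ⟨j, hj, hjy⟩ := Set.mem_iUnion₂.1 (hsF hy)
    exact Set.mem_iUnion.2 ⟨⟨j, hj⟩, hjy⟩
  obtain ⟨v, hv1, hv2, hv3⟩ := exists_subset_iUnion_closure_subset isClosed_univ
    (fun j : sF => hVopen j) (fun x _ => Set.toFinite _) hcov2
  set A : sF → Set X := fun j => closure (v j) with hA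
  classical
  set T : sF → Set (Dspace X) := fun j =>
    if q j ≤ 0 then {g : Dspace X | ∀ a ∈ A j, g.toFun a < ((q (j : X) : ℝ) : EReal)}
    else Set.univ with hT
  refine ⟨⋂ j, T j, ?_, ?_, ?_⟩
  · intro g hg
    simp only [Set.mem_iInter] at hg
    simp only [Set.mem_setOf_eq]
    set M := sF.sup' hsne (fun x => q x + r x) with hM
    have hMc : M < c := (Finset.sup'_lt_iff hsne).2 fun j hj => hqr j
    have hbound : ∀ y, g.toFun y + ((φ y : ℝ) : EReal) ≤ (M : EReal) := by
      intro y
      obtain ⟨j, hjv⟩ := Set.mem_iUnion.1 (hv1 (Set.mem_univ y))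
      have hjA : y ∈ A j := subset_closure hjv
      have hjV : y ∈ V (j : X) := hv3 j hjA
      have hgy : g.toFun y < ((q (j : X) : ℝ) : EReal) := by
        by_cases hqj : q (j : X) ≤ 0
        · have h5 := hg j
          simp only [hT, if_pos hqj] at h5
          exact h5 _ hjA
        · refine lt_of_le_of_lt (g.memD.2.1 y) ?_
          exact_mod_cast lt_of_not_ge hqj
      have h1 : g.toFun y + ((φ y : ℝ) : EReal) < ((q (j : X) + φ y : ℝ) : EReal) := by
        have h6 := EReal.add_lt_add_right_coe hgy (φ y)
        rw [← EReal.coe_add] at h6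
        exact h6
      have h2 : q (j : X) + φ y ≤ M := by
        have h7 : φ y < r (j : X) := hjV.2
        calc q (j : X) + φ y ≤ q (j : X) + r (j : X) := by linarith
          _ ≤ M := Finset.le_sup' (fun x => q x + r x) j.2
      exact le_trans (le_of_lt h1) (EReal.coe_le_coe_iff.2 h2)
    exact lt_of_le_of_lt (iSup_le hbound) (EReal.coe_lt_coe_iff.2 hMc)
  · apply isOpen_iInter_of_finite
    intro j
    simp only [hT]
    split
    · exact isOpen_basic_lt isClosed_closure ‹_›
    · exact isOpen_univ
  · simp only [Set.mem_iInter]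
    intro j
    simp only [hT]
    split
    · intro a haj
      exact (hv3 j haj).1
    · trivial

theorem continuous_nMap :
    Continuous (fun f : Dspace X => (⟨nR f.toFun, nR_idem f.memD⟩ : IspX X)) := by
  apply Continuous.subtype_mk
  apply continuous_pi
  intro φ
  have key : @Continuous (Dspace X) ℝ _ (TopologicalSpace.generateFrom
      {s : Set ℝ | ∃ a, s = Set.Ioi a ∨ s = Set.Iio a})
      (fun f : Dspace X => nR f.toFun φ) := by
    apply continuous_generateFrom_iff.2
    rintro s ⟨a, rfl | rfl⟩
    · have heq : (fun f : Dspace X => nR f.toFun φ) ⁻¹' Set.Ioi a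
          = {f : Dspace X | (a : EReal) < nE f.toFun φ} := by
        ext f
        simp only [Set.mem_preimage, Set.mem_Ioi, Set.mem_setOf_eq]
        rw [← nR_coe f.memD φ]
        exact EReal.coe_lt_coe_iff.symm
      rw [heq]; exact isOpen_nE_gt φ a
    · have heq : (fun f : Dspace X => nR f.toFun φ) ⁻¹' Set.Iio a
          = {f : Dspace X | nE f.toFun φ < (a : EReal)} := by
        ext f
        simp only [Set.mem_preimage, Set.mem_Iio, Set.mem_setOf_eq]
        rw [← nR_coe f.memD φ]
        exact EReal.coe_lt_coe_iff.symm
      rw [heq]; exact isOpen_nE_lt φ a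
  have ht := OrderTopology.topology_eq_generate_intervals (α := ℝ)
  rw [Preorder.topology] at ht
  rwa [← ht] at key

theorem Dspace.ext' {a b : Dspace X} (h : a.toFun = b.toFun) : a = b := by
  cases a; cases b
  simp only at h
  subst h
  rfl

end Stmt3Aux

open Stmt3Aux in
/-- For a compactum `X`, the maps `nX : DX → IX` and `sX : IX → DX`
(given by their defining formulas) are continuous; consequently they are mutually
inverse homeomorphisms and `DX` is compact. -/
theorem stmt3 {X : Type*} [TopologicalSpace X] [CompactSpace X] [T2Space X] :
    ∃ (n : Dspace X → IspX X) (s : IspX X → Dspace X),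
      (∀ (f : Dspace X) (φ : C(X, ℝ)),
          (((n f).1 φ : ℝ) : EReal) = ⨆ x, f.toFun x + (φ x : EReal)) ∧
      (∀ (μ : IspX X) (x : X), (s μ).toFun x = sFun μ.1 x) ∧
      Continuous n ∧ Continuous s ∧
      Function.LeftInverse n s ∧ Function.LeftInverse s n ∧
      CompactSpace (Dspace X) := by
  classical
  have hsn : ∀ f : Dspace X,
      (⟨sFun (nR f.toFun), sFun_memD (nR_idem f.memD)⟩ : Dspace X) = f :=
    fun f => Dspace.ext' (funext (sFun_nR f.memD))
  refine ⟨fun f => ⟨nR f.toFun, nR_idem f.memD⟩,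
          fun μ => ⟨sFun μ.1, sFun_memD μ.2⟩, ?_, ?_, ?_, ?_, ?_, ?_, ?_⟩
  · intro f φ
    exact nR_coe f.memD φ
  · intro μ x; rfl
  · exact continuous_nMap
  · exact continuous_sMap
  · intro μ
    apply Subtype.ext
    funext φ
    have h1 := nR_coe (sFun_memD μ.2) φ
    rw [nE_sFun μ.2 φ] at h1
    exact_mod_cast h1
  · intro f
    exact hsn f
  · have hcs : CompactSpace (IspX X) := isCompact_iff_compactSpace.1 isCompact_setOf_idem
    have hc : IsCompact (Set.univ : Set (IspX X)) := CompactSpace.isCompact_univ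
    constructor
    have hsurj : (Set.univ : Set (Dspace X)) =
        (fun μ : IspX X => (⟨sFun μ.1, sFun_memD μ.2⟩ : Dspace X)) '' Set.univ := by
      ext f
      simp only [Set.mem_univ, true_iff, Set.mem_image]
      exact ⟨⟨nR f.toFun, nR_idem f.memD⟩, trivial, hsn f⟩
    rw [hsurj]
    exact hc.image continuous_sMap
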